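/- Let {A^{(j)}} be a projective matrix system over a Bratteli diagram Br, and let {ε_j} be positive numbers in (0, 1/2) satisfying ε_j · sqrt(#Br_j) · ((A^{(1)}···A^{(j)})_{v_0,w})^{-1} · ∏_{k=1}^j (2‖A^{(k)}‖ + 1) ≤ 4^{-j} for all w ∈ Br_j. If {B^{(j)}} is another projective matrix system over Br such that for some N, |A^{(j)}_{v,w} − B^{(j)}_{v,w}| ≤ ε_j A^{(j)}_{v,w} for all entries when j ≥ N, then the inverse limit of {A^{(j)}} is affinely homeomorphic to the inverse limit of {B^{(j)}}. -/

import Mathlib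

open scoped BigOperators

variable (V : ℕ → Type) [∀ n, Fintype (V n)] [∀ n, DecidableEq (V n)]
  [∀ n, Nonempty (V n)] [Subsingleton (V 0)]

/-- The product `A^{(1)} A^{(2)} ⋯ A^{(k)}` of the matrices of a projective matrix
system over the levels of a Bratteli diagram (with our indexing, `A j` is the matrix
over `V j × V (j+1)`). -/
def prodUpTo (A : ∀ j, Matrix (V j) (V (j + 1)) ℝ) : ∀ k, Matrix (V 0) (V k) ℝ
  | 0 => 1
  | k + 1 => prodUpTo A k * A k

/-- The inverse limit `lim_j A^{(j)}`: sequences of nonnegative vectors `ψ^j ∈ [0,∞)^{V j}`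
with `ψ^j = A^{(j+1)} ψ^{j+1}`, as a subset of the product space `∏_j (V j → ℝ)`. -/
def limSet (A : ∀ j, Matrix (V j) (V (j + 1)) ℝ) : Set (∀ j, V j → ℝ) :=
  {ψ | (∀ j v, 0 ≤ ψ j v) ∧ ∀ j, ψ j = (A j).mulVec (ψ (j + 1))}

/-- The Euclidean (`ℓ²`) norm of a vector. -/
noncomputable def eNorm {ι : Type} [Fintype ι] (x : ι → ℝ) : ℝ :=
  Real.sqrt (∑ i, (x i) ^ 2)

/-- The operator norm of a matrix for the Euclidean norms. -/
noncomputable def l2opNorm {ι κ : Type} [Fintype ι] [Fintype κ] (M : Matrix ι κ ℝ) : ℝ :=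
  sSup {c | ∃ x : κ → ℝ, eNorm x ≤ 1 ∧ c = eNorm (M.mulVec x)}

open Filter Finset
set_option linter.unusedSectionVars false
set_option linter.unusedVariables false

section ENormLemmas
variable {ι κ : Type} [Fintype ι] [Fintype κ]

lemma eNorm_nonneg (x : ι → ℝ) : 0 ≤ eNorm x := Real.sqrt_nonneg _

lemma eNorm_zero : eNorm (0 : ι → ℝ) = 0 := by simp [eNorm]

lemma eNorm_eq_norm (x : ι → ℝ) :
    eNorm x = ‖(WithLp.equiv 2 (ι → ℝ)).symm x‖ := by
  rw [EuclideanSpace.norm_eq]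
  simp [eNorm, sq_abs]

lemma eNorm_add_le (x y : ι → ℝ) : eNorm (x + y) ≤ eNorm x + eNorm y := by
  rw [eNorm_eq_norm, eNorm_eq_norm, eNorm_eq_norm]
  exact norm_add_le _ _

lemma eNorm_smul (a : ℝ) (x : ι → ℝ) : eNorm (a • x) = |a| * eNorm x := by
  simp only [eNorm, Pi.smul_apply, smul_eq_mul, mul_pow]
  rw [← Finset.mul_sum, Real.sqrt_mul (sq_nonneg a), Real.sqrt_sq_eq_abs]

lemma eNorm_neg (x : ι → ℝ) : eNorm (-x) = eNorm x := by simp [eNorm]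

lemma eNorm_abs (x : ι → ℝ) : eNorm (fun i => |x i|) = eNorm x := by simp [eNorm, sq_abs]

lemma abs_le_eNorm (x : ι → ℝ) (i : ι) : |x i| ≤ eNorm x := by
  rw [eNorm, ← Real.sqrt_sq_eq_abs]
  exact Real.sqrt_le_sqrt (Finset.single_le_sum (fun j _ => sq_nonneg (x j)) (Finset.mem_univ i))

lemma eNorm_mono {x y : ι → ℝ} (h : ∀ i, |x i| ≤ y i) : eNorm x ≤ eNorm y := by
  apply Real.sqrt_le_sqrt
  apply Finset.sum_le_sum
  intro i _
  have h2 : |x i| ^ 2 ≤ y i ^ 2 := by nlinarith [abs_nonneg (x i), h i]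
  calc x i ^ 2 = |x i| ^ 2 := (sq_abs _).symm
  _ ≤ y i ^ 2 := h2

lemma eNorm_le_sqrt_card {x : ι → ℝ} {M : ℝ} (hM : 0 ≤ M) (h : ∀ i, |x i| ≤ M) :
    eNorm x ≤ Real.sqrt (Fintype.card ι) * M := by
  have h1 : eNorm x ≤ Real.sqrt (∑ _i : ι, M ^ 2) := by
    apply Real.sqrt_le_sqrt
    apply Finset.sum_le_sum
    intro i _
    have := h i
    nlinarith [abs_nonneg (x i), sq_abs (x i)]
  calc eNorm x ≤ Real.sqrt (∑ _i : ι, M ^ 2) := h1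
  _ = Real.sqrt ((Fintype.card ι : ℝ) * M ^ 2) := by
      rw [Finset.sum_const, Finset.card_univ, nsmul_eq_mul]
  _ = Real.sqrt (Fintype.card ι) * M := by
      rw [Real.sqrt_mul (by positivity), Real.sqrt_sq hM]

lemma dist_le_eNorm_sub (x y : ι → ℝ) : dist x y ≤ eNorm (x - y) := by
  rw [dist_pi_le_iff (eNorm_nonneg _)]
  intro i
  rw [Real.dist_eq]
  simpa using abs_le_eNorm (x - y) i

lemma continuous_eNorm : Continuous (eNorm : (ι → ℝ) → ℝ) := by
  unfold eNorm
  exact Real.continuous_sqrt.comp (continuous_finset_sum _ fun i _ => (continuous_apply i).pow 2)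

lemma eNorm_mulVec_le_frob (M : Matrix ι κ ℝ) (x : κ → ℝ) :
    eNorm (M.mulVec x) ≤ Real.sqrt (∑ i, ∑ j, M i j ^ 2) * eNorm x := by
  rw [eNorm, eNorm, ← Real.sqrt_mul (by positivity), Finset.sum_mul]
  apply Real.sqrt_le_sqrt
  apply Finset.sum_le_sum
  intro i _
  calc (M.mulVec x i) ^ 2 = (∑ j, M i j * x j) ^ 2 := by
        rw [Matrix.mulVec, dotProduct]
  _ ≤ (∑ j, M i j ^ 2) * (∑ j, x j ^ 2) := Finset.sum_mul_sq_le_sq_mul_sq _ _ _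

lemma l2opNorm_bddAbove (M : Matrix ι κ ℝ) :
    BddAbove {c | ∃ x : κ → ℝ, eNorm x ≤ 1 ∧ c = eNorm (M.mulVec x)} := by
  refine ⟨Real.sqrt (∑ i, ∑ j, M i j ^ 2), ?_⟩
  rintro c ⟨x, hx, rfl⟩
  calc eNorm (M.mulVec x) ≤ Real.sqrt (∑ i, ∑ j, M i j ^ 2) * eNorm x := eNorm_mulVec_le_frob M x
  _ ≤ Real.sqrt (∑ i, ∑ j, M i j ^ 2) * 1 := by
      apply mul_le_mul_of_nonneg_left hx (Real.sqrt_nonneg _)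
  _ = _ := mul_one _

lemma l2opNorm_nonneg (M : Matrix ι κ ℝ) : 0 ≤ l2opNorm M := by
  apply le_csSup (l2opNorm_bddAbove M)
  exact ⟨0, by simp [eNorm_zero], by simp [Matrix.mulVec_zero, eNorm_zero]⟩

lemma eNorm_eq_zero {x : ι → ℝ} (h : eNorm x = 0) : x = 0 := by
  funext i
  have := abs_le_eNorm x i
  rw [h] at this
  simpa using le_antisymm this (abs_nonneg _) |>.symm ▸ (abs_eq_zero.mp (le_antisymm this (abs_nonneg _)))

lemma eNorm_mulVec_le (M : Matrix ι κ ℝ) (x : κ → ℝ) :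
    eNorm (M.mulVec x) ≤ l2opNorm M * eNorm x := by
  rcases eq_or_lt_of_le (eNorm_nonneg x) with h | h
  · have hx : x = 0 := eNorm_eq_zero h.symm
    subst hx
    simp [Matrix.mulVec_zero, eNorm_zero]
  · have h1 : eNorm ((eNorm x)⁻¹ • x) = 1 := by
      rw [eNorm_smul, abs_of_pos (inv_pos.mpr h), inv_mul_cancel₀ (ne_of_gt h)]
    have h2 : eNorm (M.mulVec ((eNorm x)⁻¹ • x)) ≤ l2opNorm M :=
      le_csSup (l2opNorm_bddAbove M) ⟨_, le_of_eq h1, rfl⟩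
    rw [Matrix.mulVec_smul, eNorm_smul, abs_of_pos (inv_pos.mpr h)] at h2
    calc eNorm (M.mulVec x) = eNorm x * ((eNorm x)⁻¹ * eNorm (M.mulVec x)) := by
          field_simp
    _ ≤ eNorm x * l2opNorm M := mul_le_mul_of_nonneg_left h2 (le_of_lt h)
    _ = l2opNorm M * eNorm x := mul_comm _ _

lemma eNorm_mulVec_le_of_abs_le {M : Matrix ι κ ℝ} {M' : Matrix ι κ ℝ} {t : ℝ} (ht : 0 ≤ t)
    (h : ∀ i j, |M i j| ≤ t * M' i j) (x : κ → ℝ) :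
    eNorm (M.mulVec x) ≤ t * (l2opNorm M' * eNorm x) := by
  have h1 : ∀ i, |M.mulVec x i| ≤ (t • M'.mulVec (fun j => |x j|)) i := by
    intro i
    simp only [Matrix.mulVec, dotProduct, Pi.smul_apply, smul_eq_mul, Finset.mul_sum]
    calc |∑ j, M i j * x j| ≤ ∑ j, |M i j| * |x j| := by
          simpa [abs_mul] using Finset.abs_sum_le_sum_abs (fun j => M i j * x j) Finset.univ
    _ ≤ ∑ j, t * (M' i j * |x j|) := by
        apply Finset.sum_le_sum
        intro j _
        rw [← mul_assoc]
        exact mul_le_mul_of_nonneg_right (h i j) (abs_nonneg _)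
  calc eNorm (M.mulVec x) ≤ eNorm (t • M'.mulVec fun j => |x j|) := eNorm_mono h1
  _ = t * eNorm (M'.mulVec fun j => |x j|) := by rw [eNorm_smul, abs_of_nonneg ht]
  _ ≤ t * (l2opNorm M' * eNorm (fun j => |x j|)) :=
      mul_le_mul_of_nonneg_left (eNorm_mulVec_le _ _) ht
  _ = t * (l2opNorm M' * eNorm x) := by rw [eNorm_abs]

end ENormLemmas


set_option linter.unusedSectionVars false
section Seg
variable (V : ℕ → Type) [∀ n, Fintype (V n)] [∀ n, DecidableEq (V n)] [∀ n, Nonempty (V n)]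

variable (C : ∀ j, Matrix (V j) (V (j + 1)) ℝ)

def segMat (j : ℕ) : (n : ℕ) → Matrix (V j) (V n) ℝ
  | 0 => Matrix.of fun v w => if h : j = 0 then (1 : Matrix (V 0) (V 0) ℝ) (h ▸ v) w else 0
  | n + 1 =>
    if h : j = n + 1 then Matrix.of fun v w => (1 : Matrix (V (n + 1)) (V (n + 1)) ℝ) (h ▸ v) w
    else segMat j n * C n

lemma segMat_self (j : ℕ) : segMat V C j j = 1 := by
  cases j with
  | zero => ext v w; simp [segMat]
  | succ n => ext v w; simp [segMat]

lemma segMat_succ {j n : ℕ} (h : j ≤ n) : segMat V C j (n + 1) = segMat V C j n * C n := by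
  rw [segMat, dif_neg (by omega)]

lemma segMat_comp {j m n : ℕ} (h1 : j ≤ m) (h2 : m ≤ n) :
    segMat V C j n = segMat V C j m * segMat V C m n := by
  induction n, h2 using Nat.le_induction with
  | base => rw [segMat_self, Matrix.mul_one]
  | succ n hmn ih =>
      rw [segMat_succ V C (le_trans h1 hmn), segMat_succ V C hmn, ih, Matrix.mul_assoc]

lemma segMat_succ_left {j n : ℕ} (h : j < n) :
    segMat V C j n = C j * segMat V C (j + 1) n := by
  rw [segMat_comp V C (Nat.le_succ j) (by omega : j + 1 ≤ n)]
  congr 1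
  rw [segMat_succ V C (le_refl j), segMat_self, Matrix.one_mul]

lemma segMat_nonneg (hC : ∀ k v w, 0 ≤ C k v w) (j : ℕ) :
    ∀ n v w, 0 ≤ segMat V C j n v w := by
  intro n
  induction n with
  | zero =>
      intro v w
      rw [segMat]
      by_cases h : j = 0
      · simp only [Matrix.of_apply, dif_pos h]
        by_cases h2 : (h ▸ v) = w <;> simp [Matrix.one_apply, h2]
      · simp [h]
  | succ n ih =>
      intro v w
      rw [segMat]
      by_cases h : j = n + 1
      · simp only [dif_pos h, Matrix.of_apply]
        by_cases h2 : (h ▸ v) = w <;> simp [Matrix.one_apply, h2]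
      · simp only [dif_neg h, Matrix.mul_apply]
        exact Finset.sum_nonneg fun u _ => mul_nonneg (ih v u) (hC n u w)

lemma limSet_seg {A : ∀ j, Matrix (V j) (V (j + 1)) ℝ} {ψ : ∀ j, V j → ℝ}
    (hψ : ∀ j, ψ j = (A j).mulVec (ψ (j + 1))) {j n : ℕ} (h : j ≤ n) :
    ψ j = (segMat V A j n).mulVec (ψ n) := by
  induction n, h using Nat.le_induction with
  | base => rw [segMat_self, Matrix.one_mulVec]
  | succ n hjn ih =>
      rw [segMat_succ V A hjn, ← Matrix.mulVec_mulVec, ← hψ n, ih]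

lemma prodUpTo_eq_seg (A : ∀ j, Matrix (V j) (V (j + 1)) ℝ) (n : ℕ) :
    prodUpTo V A n = segMat V A 0 n := by
  induction n with
  | zero => rw [prodUpTo, segMat_self]
  | succ n ih => rw [prodUpTo, segMat_succ V A (Nat.zero_le n), ih]

lemma eNorm_segMat_mulVec_le (b : ℕ → ℝ) (hb : ∀ k, 0 ≤ b k)
    (hCb : ∀ k (x : V (k + 1) → ℝ), eNorm ((C k).mulVec x) ≤ b k * eNorm x)
    {j n : ℕ} (h : j ≤ n) (x : V n → ℝ) :
    eNorm ((segMat V C j n).mulVec x) ≤ (∏ k ∈ Finset.Ico j n, b k) * eNorm x := by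
  induction n, h using Nat.le_induction with
  | base =>
      rw [segMat_self, Matrix.one_mulVec, Finset.Ico_self, Finset.prod_empty, one_mul]
  | succ n hjn ih =>
      rw [segMat_succ V C hjn, ← Matrix.mulVec_mulVec]
      calc eNorm ((segMat V C j n).mulVec ((C n).mulVec x))
          ≤ (∏ k ∈ Finset.Ico j n, b k) * eNorm ((C n).mulVec x) := ih _
        _ ≤ (∏ k ∈ Finset.Ico j n, b k) * (b n * eNorm x) := by
            apply mul_le_mul_of_nonneg_left (hCb n x)
            exact Finset.prod_nonneg fun k _ => hb k
        _ = (∏ k ∈ Finset.Ico j (n + 1), b k) * eNorm x := by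
            rw [Finset.prod_Ico_succ_top hjn, mul_assoc]

end Seg


section Geom
variable {ι : Type} [Fintype ι]

lemma exists_lim_of_geometric (F : ℕ → ι → ℝ) (K : ℝ) (hK : 0 ≤ K) (M : ℕ)
    (hF : ∀ n, M ≤ n → eNorm (F (n + 1) - F n) ≤ K * (1 / 4 : ℝ) ^ (n + 1)) :
    ∃ L, Filter.Tendsto F Filter.atTop (nhds L) ∧
      ∀ n, M ≤ n → eNorm (L - F n) ≤ K * (1 / 4 : ℝ) ^ n := by
  have pair : ∀ n m, M ≤ n → n ≤ m → eNorm (F m - F n) ≤ K * (1 / 4 : ℝ) ^ n := by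
    intro n m hMn hnm
    have main : eNorm (F m - F n) ≤ (K / 3) * ((1 / 4 : ℝ) ^ n - (1 / 4 : ℝ) ^ m) := by
      induction m, hnm using Nat.le_induction with
      | base => simp [sub_self, eNorm_zero]
      | succ m hnm ih =>
          have tri : eNorm (F (m + 1) - F n) ≤ eNorm (F (m + 1) - F m) + eNorm (F m - F n) := by
            have h : F (m + 1) - F n = (F (m + 1) - F m) + (F m - F n) := by abel
            rw [h]; exact eNorm_add_le _ _
          have h1 := hF m (le_trans hMn hnm)
          have e1 : (1 / 4 : ℝ) ^ (m + 1) = (1 / 4 : ℝ) ^ m / 4 := by rw [pow_succ]; ring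
          have e2 : K / 3 * ((1 / 4 : ℝ) ^ n - (1 / 4 : ℝ) ^ (m + 1)) =
              K * (1 / 4 : ℝ) ^ (m + 1) + K / 3 * ((1 / 4 : ℝ) ^ n - (1 / 4 : ℝ) ^ m) := by
            rw [e1]; ring
          linarith [tri, h1, ih]
    have := pow_nonneg (by norm_num : (0:ℝ) ≤ 1/4) m
    have := pow_nonneg (by norm_num : (0:ℝ) ≤ 1/4) n
    nlinarith [mul_nonneg hK (pow_nonneg (by norm_num : (0:ℝ) ≤ 1/4) m),
      mul_nonneg hK (pow_nonneg (by norm_num : (0:ℝ) ≤ 1/4) n)]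
  have cauchy : CauchySeq F := by
    rw [Metric.cauchySeq_iff']
    intro δ hδ
    have h0 : Filter.Tendsto (fun n => K * (1 / 4 : ℝ) ^ n) Filter.atTop (nhds 0) := by
      simpa using
        (tendsto_pow_atTop_nhds_zero_of_lt_one (by norm_num) (by norm_num : (1/4:ℝ) < 1)).const_mul K
    obtain ⟨t, ht1, ht2⟩ :=
      ((h0.eventually_lt_const hδ).and (Filter.eventually_ge_atTop M)).exists
    refine ⟨t, fun n hn => ?_⟩
    exact lt_of_le_of_lt (le_trans (dist_le_eNorm_sub _ _) (pair t n ht2 hn)) ht1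
  obtain ⟨L, hL⟩ := cauchySeq_tendsto_of_complete cauchy
  refine ⟨L, hL, fun n hn => ?_⟩
  have ht : Filter.Tendsto (fun m => eNorm (F m - F n)) Filter.atTop (nhds (eNorm (L - F n))) :=
    (continuous_eNorm.tendsto _).comp (hL.sub tendsto_const_nhds)
  apply le_of_tendsto ht
  filter_upwards [Filter.eventually_ge_atTop n] with m hm
  exact pair n m hn hm

end Geom

section Consts
variable {V : ℕ → Type} [∀ n, Fintype (V n)]
variable (A B : ∀ j, Matrix (V j) (V (j + 1)) ℝ) (N : ℕ)

noncomputable def nbA (k : ℕ) : ℝ := 2 * l2opNorm (A k) + 1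

noncomputable def DD (j : ℕ) : ℝ := ∏ k ∈ Finset.range j, nbA A k

noncomputable def bB (k : ℕ) : ℝ := if k < N then l2opNorm (B k) else nbA A k

noncomputable def EE : ℝ := ∏ k ∈ Finset.range N, (l2opNorm (B k) + 1)

lemma one_le_prod_R {s : Finset ℕ} {f : ℕ → ℝ} (h : ∀ i ∈ s, 1 ≤ f i) :
    1 ≤ ∏ i ∈ s, f i := by
  have h2 := Finset.prod_le_prod (s := s) (f := fun _ => (1 : ℝ)) (g := f)
    (fun _ _ => zero_le_one) h
  simpa using h2

lemma div_trick {x dj dn e : ℝ} (hdj : 0 < dj) (hdn : 0 < dn) (h : x * dj ≤ e * dn) :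
    x * dn⁻¹ ≤ e * dj⁻¹ := by
  rw [← div_eq_mul_inv, ← div_eq_mul_inv, div_le_div_iff₀ hdn hdj]
  linarith

lemma one_le_nbA (k : ℕ) : 1 ≤ nbA A k := by
  have := l2opNorm_nonneg (A k); unfold nbA; linarith

lemma nbA_nonneg (k : ℕ) : 0 ≤ nbA A k := le_trans zero_le_one (one_le_nbA A k)

lemma one_le_DD (j : ℕ) : 1 ≤ DD A j :=
  one_le_prod_R fun k _ => one_le_nbA A k

lemma DD_pos (j : ℕ) : 0 < DD A j := lt_of_lt_of_le zero_lt_one (one_le_DD A j)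

lemma DD_mul_Ico {j n : ℕ} (h : j ≤ n) :
    DD A j * ∏ k ∈ Finset.Ico j n, nbA A k = DD A n := by
  unfold DD
  rw [Finset.range_eq_Ico, Finset.range_eq_Ico]
  exact Finset.prod_Ico_consecutive (nbA A) (Nat.zero_le j) h

lemma one_le_EE : 1 ≤ EE B N :=
  one_le_prod_R fun k _ => by have := l2opNorm_nonneg (B k); linarith

lemma bB_nonneg (k : ℕ) : 0 ≤ bB A B N k := by
  unfold bB; split
  · exact l2opNorm_nonneg _
  · exact nbA_nonneg A k

lemma prod_bB_le {j n : ℕ} (h : j ≤ n) (hN : N ≤ n) :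
    (∏ k ∈ Finset.Ico j n, bB A B N k) * DD A j ≤ EE B N * DD A n := by
  rcases le_or_gt N j with hNj | hjN
  · have he : ∀ k ∈ Finset.Ico j n, bB A B N k = nbA A k := by
      intro k hk
      rw [Finset.mem_Ico] at hk
      rw [bB, if_neg (by omega)]
    rw [Finset.prod_congr rfl he, mul_comm, DD_mul_Ico A h]
    exact le_mul_of_one_le_left (le_of_lt (DD_pos A n)) (one_le_EE B N)
  · have hsplit : (∏ k ∈ Finset.Ico j n, bB A B N k) =
        (∏ k ∈ Finset.Ico j N, bB A B N k) * ∏ k ∈ Finset.Ico N n, bB A B N k :=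
      (Finset.prod_Ico_consecutive _ (le_of_lt hjN) hN).symm
    have h1 : (∏ k ∈ Finset.Ico j N, bB A B N k) ≤ EE B N := by
      have h1a : (∏ k ∈ Finset.Ico j N, bB A B N k) ≤
          ∏ k ∈ Finset.Ico j N, (l2opNorm (B k) + 1) := by
        apply Finset.prod_le_prod (fun k _ => bB_nonneg A B N k)
        intro k hk
        rw [Finset.mem_Ico] at hk
        rw [bB, if_pos hk.2]
        linarith
      have h1b : (∏ k ∈ Finset.Ico j N, (l2opNorm (B k) + 1)) ≤ EE B N := by
        unfold EE
        rw [Finset.range_eq_Ico, ← Finset.prod_Ico_consecutive _ (Nat.zero_le j) (le_of_lt hjN)]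
        apply le_mul_of_one_le_left
        · exact Finset.prod_nonneg fun k _ => by have := l2opNorm_nonneg (B k); linarith
        · exact one_le_prod_R fun k _ => by have := l2opNorm_nonneg (B k); linarith
      linarith
    have h2 : ∀ k ∈ Finset.Ico N n, bB A B N k = nbA A k := by
      intro k hk
      rw [Finset.mem_Ico] at hk
      rw [bB, if_neg (by omega)]
    have h3 : DD A j * ∏ k ∈ Finset.Ico j n, nbA A k = DD A n := DD_mul_Ico A h
    have h4 : (∏ k ∈ Finset.Ico N n, bB A B N k) * DD A j ≤ DD A n := by
      rw [Finset.prod_congr rfl h2]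
      calc (∏ k ∈ Finset.Ico N n, nbA A k) * DD A j
          ≤ (∏ k ∈ Finset.Ico N n, nbA A k) * DD A N := by
            apply mul_le_mul_of_nonneg_left _ (Finset.prod_nonneg fun k _ => nbA_nonneg A k)
            unfold DD
            rw [Finset.range_eq_Ico, Finset.range_eq_Ico,
              ← Finset.prod_Ico_consecutive _ (Nat.zero_le j) (le_of_lt hjN)]
            apply le_mul_of_one_le_right
            · exact Finset.prod_nonneg fun k _ => nbA_nonneg A k
            · exact one_le_prod_R fun k _ => one_le_nbA A k
        _ = DD A n := by rw [mul_comm, DD_mul_Ico A hN]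
    rw [hsplit]
    calc (∏ k ∈ Finset.Ico j N, bB A B N k) * (∏ k ∈ Finset.Ico N n, bB A B N k) * DD A j
        = (∏ k ∈ Finset.Ico j N, bB A B N k) * ((∏ k ∈ Finset.Ico N n, bB A B N k) * DD A j) := by
          ring
      _ ≤ EE B N * DD A n := by
          apply mul_le_mul h1 h4
          · exact mul_nonneg (Finset.prod_nonneg fun k _ => bB_nonneg A B N k)
              (le_of_lt (DD_pos A j))
          · linarith [one_le_EE B N]

lemma prod_lA_le {j n : ℕ} (h : j ≤ n) :
    (∏ k ∈ Finset.Ico j n, l2opNorm (A k)) * DD A j ≤ DD A n := by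
  have h1 : (∏ k ∈ Finset.Ico j n, l2opNorm (A k)) ≤ ∏ k ∈ Finset.Ico j n, nbA A k := by
    apply Finset.prod_le_prod (fun k _ => l2opNorm_nonneg _)
    intro k _
    have := l2opNorm_nonneg (A k); unfold nbA; linarith
  calc (∏ k ∈ Finset.Ico j n, l2opNorm (A k)) * DD A j
      ≤ (∏ k ∈ Finset.Ico j n, nbA A k) * DD A j :=
        mul_le_mul_of_nonneg_right h1 (le_of_lt (DD_pos A j))
    _ = DD A n := by rw [mul_comm, DD_mul_Ico A h]

lemma prod_lA_pow_le {j n : ℕ} (h : j ≤ n) :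
    (∏ k ∈ Finset.Ico j n, l2opNorm (A k)) * l2opNorm (A n) * (2 : ℝ) ^ (n + 1)
      ≤ (2 : ℝ) ^ j * (DD A j)⁻¹ * ∏ k ∈ Finset.range (n + 1), nbA A k := by
  have key : (∏ k ∈ Finset.Ico j (n + 1), (2 * l2opNorm (A k))) ≤
      ∏ k ∈ Finset.Ico j (n + 1), nbA A k := by
    apply Finset.prod_le_prod (fun k _ => mul_nonneg (by norm_num) (l2opNorm_nonneg _))
    intro k _; unfold nbA; linarith
  have hsplit : (∏ k ∈ Finset.Ico j (n + 1), (2 * l2opNorm (A k))) =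
      (2 : ℝ) ^ (n + 1 - j) * ∏ k ∈ Finset.Ico j (n + 1), l2opNorm (A k) := by
    rw [Finset.prod_mul_distrib, Finset.prod_const, Nat.card_Ico]
  have hpow : (2 : ℝ) ^ (n + 1) = (2 : ℝ) ^ j * (2 : ℝ) ^ (n + 1 - j) := by
    rw [← pow_add]; congr 1; omega
  have htop : (∏ k ∈ Finset.Ico j n, l2opNorm (A k)) * l2opNorm (A n) =
      ∏ k ∈ Finset.Ico j (n + 1), l2opNorm (A k) :=
    (Finset.prod_Ico_succ_top h _).symm
  have hD : (∏ k ∈ Finset.Ico j (n + 1), nbA A k) =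
      (DD A j)⁻¹ * ∏ k ∈ Finset.range (n + 1), nbA A k := by
    have h5 : DD A j * ∏ k ∈ Finset.Ico j (n + 1), nbA A k =
        ∏ k ∈ Finset.range (n + 1), nbA A k := DD_mul_Ico A (by omega)
    rw [← h5, inv_mul_cancel_left₀ (ne_of_gt (DD_pos A j))]
  calc (∏ k ∈ Finset.Ico j n, l2opNorm (A k)) * l2opNorm (A n) * (2 : ℝ) ^ (n + 1)
      = (2 : ℝ) ^ j * ((2 : ℝ) ^ (n + 1 - j) * ∏ k ∈ Finset.Ico j (n + 1), l2opNorm (A k)) := by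
        rw [htop, hpow]; ring
    _ = (2 : ℝ) ^ j * ∏ k ∈ Finset.Ico j (n + 1), (2 * l2opNorm (A k)) := by rw [hsplit]
    _ ≤ (2 : ℝ) ^ j * ∏ k ∈ Finset.Ico j (n + 1), nbA A k :=
        mul_le_mul_of_nonneg_left key (by positivity)
    _ = (2 : ℝ) ^ j * (DD A j)⁻¹ * ∏ k ∈ Finset.range (n + 1), nbA A k := by rw [hD]; ring

end Consts


section Vec
variable {V : ℕ → Type} [∀ n, Fintype (V n)] [∀ n, DecidableEq (V n)] [∀ n, Nonempty (V n)]
variable {A B : ∀ j, Matrix (V j) (V (j + 1)) ℝ} {ε : ℕ → ℝ} {N : ℕ}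

lemma prodA_pos (hA : ∀ j v w, 0 ≤ A j v w)
    (hApos : ∀ k (v0 : V 0) (w : V k), prodUpTo V A k v0 w ≠ 0) (n : ℕ) (v0 : V 0) (w : V n) :
    0 < prodUpTo V A n v0 w := by
  have h1 : 0 ≤ prodUpTo V A n v0 w := by
    rw [prodUpTo_eq_seg]; exact segMat_nonneg V A hA 0 n v0 w
  exact lt_of_le_of_ne h1 (Ne.symm (hApos n v0 w))

lemma memA_bound (hA : ∀ j v w, 0 ≤ A j v w) {ψ : ∀ j, V j → ℝ}
    (hψ : ψ ∈ limSet V A) (v0 : V 0) (n : ℕ) (w : V n) :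
    prodUpTo V A n v0 w * ψ n w ≤ ψ 0 v0 := by
  have h0 : ψ 0 = (segMat V A 0 n).mulVec (ψ n) := limSet_seg V hψ.2 (Nat.zero_le n)
  have h1 : ψ 0 v0 = ∑ w', segMat V A 0 n v0 w' * ψ n w' := by
    rw [h0]; simp [Matrix.mulVec, dotProduct]
  rw [h1, prodUpTo_eq_seg]
  exact Finset.single_le_sum
    (fun w' _ => mul_nonneg (segMat_nonneg V A hA 0 n v0 w') (hψ.1 n w'))
    (Finset.mem_univ w)

lemma B_ge (hA : ∀ j v w, 0 ≤ A j v w) (hε : ∀ j, 0 < ε j ∧ ε j < 1 / 2)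
    (hpert : ∀ j, N ≤ j → ∀ v w, |A j v w - B j v w| ≤ ε j * A j v w)
    {n : ℕ} (hn : N ≤ n) (v : V n) (w : V (n + 1)) :
    (2 : ℝ)⁻¹ * A n v w ≤ B n v w := by
  have h1 := abs_le.mp (hpert n hn v w)
  have h2 := (hε n).2
  have h3 := hA n v w
  nlinarith

lemma B_abs_le (hA : ∀ j v w, 0 ≤ A j v w) (hB : ∀ j v w, 0 ≤ B j v w)
    (hε : ∀ j, 0 < ε j ∧ ε j < 1 / 2)
    (hpert : ∀ j, N ≤ j → ∀ v w, |A j v w - B j v w| ≤ ε j * A j v w)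
    {n : ℕ} (hn : N ≤ n) (v : V n) (w : V (n + 1)) :
    |B n v w| ≤ 2 * A n v w := by
  have h1 := abs_le.mp (hpert n hn v w)
  have h2 := (hε n).2
  have h3 := hA n v w
  have h4 := hB n v w
  rw [abs_of_nonneg h4]
  nlinarith

lemma segBA_ge (hA : ∀ j v w, 0 ≤ A j v w) (hB : ∀ j v w, 0 ≤ B j v w)
    (hε : ∀ j, 0 < ε j ∧ ε j < 1 / 2)
    (hpert : ∀ j, N ≤ j → ∀ v w, |A j v w - B j v w| ≤ ε j * A j v w)
    {n : ℕ} (hn : N ≤ n) :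
    ∀ v w, (2 : ℝ)⁻¹ ^ (n - N) * segMat V A N n v w ≤ segMat V B N n v w := by
  induction n, hn using Nat.le_induction with
  | base => intro v w; rw [segMat_self, segMat_self]; simp
  | succ n hn ih =>
      intro v w
      rw [segMat_succ V A hn, segMat_succ V B hn, Matrix.mul_apply, Matrix.mul_apply,
        (by omega : n + 1 - N = (n - N) + 1), pow_succ, Finset.mul_sum]
      apply Finset.sum_le_sum
      intro u _
      have h1 := ih v u
      have h2 := B_ge hA hε hpert hn u w
      have h3 := hA n u w
      have h4 := segMat_nonneg V A hA N n v u
      have h5 := segMat_nonneg V B hB N n v u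
      calc (2 : ℝ)⁻¹ ^ (n - N) * 2⁻¹ * (segMat V A N n v u * A n u w)
          = ((2 : ℝ)⁻¹ ^ (n - N) * segMat V A N n v u) * (2⁻¹ * A n u w) := by ring
        _ ≤ segMat V B N n v u * B n u w := by
            apply mul_le_mul h1 h2 (by positivity) h5

lemma memB_bound (hA : ∀ j v w, 0 ≤ A j v w)
    (hB : ∀ j v w, 0 ≤ B j v w) (hε : ∀ j, 0 < ε j ∧ ε j < 1 / 2)
    (hpert : ∀ j, N ≤ j → ∀ v w, |A j v w - B j v w| ≤ ε j * A j v w)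
    {φ : ∀ j, V j → ℝ} (hφ : φ ∈ limSet V B) (v0 : V 0) {n : ℕ} (hn : N ≤ n) (w : V n) :
    prodUpTo V A n v0 w * φ n w ≤
      ((∑ v, prodUpTo V A N v0 v) * (∑ v, φ N v) * ((2 : ℝ) ^ N)⁻¹) * 2 ^ n := by
  obtain ⟨vm, _, hvm⟩ := Finset.exists_max_image Finset.univ
    (fun v => segMat V A N n v w) Finset.univ_nonempty
  have hsegnn : ∀ v : V N, 0 ≤ segMat V A N n v w := fun v => segMat_nonneg V A hA N n v w
  have hS : prodUpTo V A n v0 w ≤ (∑ v, prodUpTo V A N v0 v) * segMat V A N n vm w := by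
    have hcomp : prodUpTo V A n v0 w = ∑ v, segMat V A 0 N v0 v * segMat V A N n v w := by
      rw [prodUpTo_eq_seg, segMat_comp V A (Nat.zero_le N) hn, Matrix.mul_apply]
    rw [hcomp, Finset.sum_mul]
    apply Finset.sum_le_sum
    intro v _
    rw [prodUpTo_eq_seg]
    exact mul_le_mul_of_nonneg_left (hvm v (Finset.mem_univ v)) (segMat_nonneg V A hA 0 N v0 v)
  have hphim : (2 : ℝ)⁻¹ ^ (n - N) * (segMat V A N n vm w * φ n w) ≤ φ N vm := by
    have h0 : φ N = (segMat V B N n).mulVec (φ n) := limSet_seg V hφ.2 hn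
    have h1 : φ N vm = ∑ w', segMat V B N n vm w' * φ n w' := by
      rw [h0]; simp [Matrix.mulVec, dotProduct]
    rw [h1]
    calc (2 : ℝ)⁻¹ ^ (n - N) * (segMat V A N n vm w * φ n w)
        = ((2 : ℝ)⁻¹ ^ (n - N) * segMat V A N n vm w) * φ n w := by ring
      _ ≤ segMat V B N n vm w * φ n w :=
          mul_le_mul_of_nonneg_right (segBA_ge hA hB hε hpert hn vm w) (hφ.1 n w)
      _ ≤ ∑ w', segMat V B N n vm w' * φ n w' :=
          Finset.single_le_sum
            (fun w' _ => mul_nonneg (segMat_nonneg V B hB N n vm w') (hφ.1 n w'))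
            (Finset.mem_univ w)
  have hφNvm : φ N vm ≤ ∑ v, φ N v :=
    Finset.single_le_sum (fun v _ => hφ.1 N v) (Finset.mem_univ vm)
  have hcval : ((2 : ℝ)⁻¹) ^ (n - N) = ((2 : ℝ) ^ n)⁻¹ * 2 ^ N := by
    rw [inv_pow, pow_sub₀ (2 : ℝ) (by norm_num) hn]
    field_simp
  have hSnn : 0 ≤ ∑ v, prodUpTo V A N v0 v := by
    apply Finset.sum_nonneg
    intro v _
    rw [prodUpTo_eq_seg]
    exact segMat_nonneg V A hA 0 N v0 v
  have hkey : segMat V A N n vm w * φ n w ≤ (∑ v, φ N v) * (((2 : ℝ) ^ N)⁻¹ * 2 ^ n) := by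
    have h2n : (0 : ℝ) < 2 ^ n := by positivity
    have h6 : segMat V A N n vm w * φ n w ≤ (2 : ℝ) ^ n * (((2 : ℝ) ^ N)⁻¹ * φ N vm) := by
      have h7 : ((2 : ℝ) ^ n)⁻¹ * (2 ^ N * (segMat V A N n vm w * φ n w)) ≤ φ N vm := by
        calc ((2 : ℝ) ^ n)⁻¹ * ((2:ℝ) ^ N * (segMat V A N n vm w * φ n w))
            = (2 : ℝ)⁻¹ ^ (n - N) * (segMat V A N n vm w * φ n w) := by rw [hcval]; ring
          _ ≤ φ N vm := hphim
      calc segMat V A N n vm w * φ n w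
          = (2 : ℝ) ^ n * (((2:ℝ) ^ N)⁻¹ * (((2 : ℝ) ^ n)⁻¹ * (2 ^ N * (segMat V A N n vm w * φ n w)))) := by
            field_simp
          _ ≤ (2 : ℝ) ^ n * (((2 : ℝ) ^ N)⁻¹ * φ N vm) := by
            apply mul_le_mul_of_nonneg_left _ (le_of_lt h2n)
            exact mul_le_mul_of_nonneg_left h7 (by positivity)
    calc segMat V A N n vm w * φ n w ≤ (2 : ℝ) ^ n * (((2 : ℝ) ^ N)⁻¹ * φ N vm) := h6
      _ ≤ (2 : ℝ) ^ n * (((2 : ℝ) ^ N)⁻¹ * ∑ v, φ N v) := by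
          apply mul_le_mul_of_nonneg_left _ (le_of_lt h2n)
          exact mul_le_mul_of_nonneg_left hφNvm (by positivity)
      _ = (∑ v, φ N v) * (((2 : ℝ) ^ N)⁻¹ * 2 ^ n) := by ring
  calc prodUpTo V A n v0 w * φ n w
      ≤ ((∑ v, prodUpTo V A N v0 v) * segMat V A N n vm w) * φ n w :=
        mul_le_mul_of_nonneg_right hS (hφ.1 n w)
    _ = (∑ v, prodUpTo V A N v0 v) * (segMat V A N n vm w * φ n w) := by ring
    _ ≤ (∑ v, prodUpTo V A N v0 v) * ((∑ v, φ N v) * (((2 : ℝ) ^ N)⁻¹ * 2 ^ n)) :=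
        mul_le_mul_of_nonneg_left hkey hSnn
    _ = ((∑ v, prodUpTo V A N v0 v) * (∑ v, φ N v) * ((2 : ℝ) ^ N)⁻¹) * 2 ^ n := by ring

lemma bB_opBound (hA : ∀ j v w, 0 ≤ A j v w) (hB : ∀ j v w, 0 ≤ B j v w)
    (hε : ∀ j, 0 < ε j ∧ ε j < 1 / 2)
    (hpert : ∀ j, N ≤ j → ∀ v w, |A j v w - B j v w| ≤ ε j * A j v w) :
    ∀ k (x : V (k + 1) → ℝ), eNorm ((B k).mulVec x) ≤ bB A B N k * eNorm x := by
  intro k x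
  by_cases hk : k < N
  · rw [bB, if_pos hk]; exact eNorm_mulVec_le _ _
  · rw [bB, if_neg hk]
    have h2 := eNorm_mulVec_le_of_abs_le (by norm_num : (0:ℝ) ≤ 2)
      (fun v w => B_abs_le hA hB hε hpert (not_lt.mp hk) v w) x
    unfold nbA
    nlinarith [eNorm_nonneg x, l2opNorm_nonneg (A k),
      mul_nonneg (l2opNorm_nonneg (A k)) (eNorm_nonneg x)]

end Vec


section Transfer
variable {V : ℕ → Type} [∀ n, Fintype (V n)] [∀ n, DecidableEq (V n)] [∀ n, Nonempty (V n)]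
variable {A : ∀ j, Matrix (V j) (V (j + 1)) ℝ} {ε : ℕ → ℝ} {N : ℕ}

lemma increment_bound
    (hA : ∀ j v w, 0 ≤ A j v w)
    (hApos : ∀ k (v0 : V 0) (w : V k), prodUpTo V A k v0 w ≠ 0)
    (hbound : ∀ (j : ℕ) (v0 : V 0) (w : V (j + 1)),
      ε j * Real.sqrt (Fintype.card (V (j + 1))) * (prodUpTo V A (j + 1) v0 w)⁻¹ *
          ∏ k ∈ Finset.range (j + 1), (2 * l2opNorm (A k) + 1) ≤ (1 / 4 : ℝ) ^ (j + 1))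
    (hε : ∀ j, 0 < ε j ∧ ε j < 1 / 2)
    (C Dm : ∀ j, Matrix (V j) (V (j + 1)) ℝ)
    (χ : ∀ j, V j → ℝ) (hχ0 : ∀ n v, 0 ≤ χ n v)
    (hχ : ∀ n, χ n = (Dm n).mulVec (χ (n + 1)))
    (hCD : ∀ n, N ≤ n → ∀ v w, |C n v w - Dm n v w| ≤ ε n * A n v w)
    (b : ℕ → ℝ) (hb0 : ∀ k, 0 ≤ b k)
    (hCb : ∀ k (x : V (k + 1) → ℝ), eNorm ((C k).mulVec x) ≤ b k * eNorm x)
    (v0 : V 0) (c γ : ℝ) (hc : 0 ≤ c) (hγ : 0 < γ)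
    (hχb : ∀ n, N ≤ n → ∀ w : V n, prodUpTo V A n v0 w * χ n w ≤ c * γ ^ n)
    (j : ℕ) (R : ℝ) (hR0 : 0 ≤ R)
    (hR : ∀ n, N ≤ n → j ≤ n → (∏ k ∈ Finset.Ico j n, b k) * l2opNorm (A n) * γ ^ (n + 1)
        ≤ R * ∏ k ∈ Finset.range (n + 1), (2 * l2opNorm (A k) + 1)) :
    ∀ n, N ≤ n → j ≤ n →
      eNorm ((segMat V C j (n + 1)).mulVec (χ (n + 1)) - (segMat V C j n).mulVec (χ n))
        ≤ c * R * (1 / 4 : ℝ) ^ (n + 1) := by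
  intro n hNn hjn
  have hdiff : (segMat V C j (n + 1)).mulVec (χ (n + 1)) - (segMat V C j n).mulVec (χ n)
      = (segMat V C j n).mulVec ((C n - Dm n).mulVec (χ (n + 1))) := by
    rw [segMat_succ V C hjn, ← Matrix.mulVec_mulVec, Matrix.sub_mulVec, Matrix.mulVec_sub,
      hχ n]
  rw [hdiff]
  set u := (C n - Dm n).mulVec (χ (n + 1)) with hu
  have hue : ∀ v, |u v| ≤ (ε n • (A n).mulVec (χ (n + 1))) v := by
    intro v
    simp only [hu, Matrix.mulVec, dotProduct, Matrix.sub_apply, Pi.smul_apply,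
      smul_eq_mul, Finset.mul_sum]
    calc |∑ w, (C n v w - Dm n v w) * χ (n + 1) w|
        ≤ ∑ w, |C n v w - Dm n v w| * χ (n + 1) w := by
          refine le_trans (Finset.abs_sum_le_sum_abs _ _) ?_
          apply Finset.sum_le_sum; intro w _
          rw [abs_mul, abs_of_nonneg (hχ0 (n + 1) w)]
      _ ≤ ∑ w, ε n * (A n v w * χ (n + 1) w) := by
          apply Finset.sum_le_sum; intro w _
          rw [← mul_assoc]
          exact mul_le_mul_of_nonneg_right (hCD n hNn v w) (hχ0 (n + 1) w)
  have h1 : eNorm u ≤ ε n * (l2opNorm (A n) * eNorm (χ (n + 1))) := by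
    calc eNorm u ≤ eNorm (ε n • (A n).mulVec (χ (n + 1))) := eNorm_mono hue
      _ = ε n * eNorm ((A n).mulVec (χ (n + 1))) := by
          rw [eNorm_smul, abs_of_pos (hε n).1]
      _ ≤ ε n * (l2opNorm (A n) * eNorm (χ (n + 1))) :=
          mul_le_mul_of_nonneg_left (eNorm_mulVec_le _ _) (le_of_lt (hε n).1)
  obtain ⟨wm, _, hwm⟩ := Finset.exists_max_image Finset.univ
    (fun w => χ (n + 1) w) Finset.univ_nonempty
  have hqpos : 0 < prodUpTo V A (n + 1) v0 wm := prodA_pos hA hApos (n + 1) v0 wm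
  have hχm : χ (n + 1) wm ≤ c * γ ^ (n + 1) * (prodUpTo V A (n + 1) v0 wm)⁻¹ := by
    rw [← div_eq_mul_inv, le_div_iff₀ hqpos, mul_comm]
    exact hχb (n + 1) (by omega) wm
  have h2 : eNorm (χ (n + 1)) ≤ Real.sqrt (Fintype.card (V (n + 1))) *
      (c * γ ^ (n + 1) * (prodUpTo V A (n + 1) v0 wm)⁻¹) := by
    apply eNorm_le_sqrt_card
    · exact mul_nonneg (mul_nonneg hc (le_of_lt (pow_pos hγ _)))
        (le_of_lt (inv_pos.mpr hqpos))
    · intro w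
      rw [abs_of_nonneg (hχ0 (n + 1) w)]
      exact le_trans (hwm w (Finset.mem_univ w)) hχm
  have h3 := eNorm_segMat_mulVec_le V C b hb0 hCb hjn u
  have hPnn : 0 ≤ ∏ k ∈ Finset.Ico j n, b k := Finset.prod_nonneg fun k _ => hb0 k
  have hb2 := hbound n v0 wm
  have hR2 := hR n hNn hjn
  have hαnn := l2opNorm_nonneg (A n)
  have hsnn : (0:ℝ) ≤ Real.sqrt (Fintype.card (V (n + 1))) := Real.sqrt_nonneg _
  have hεsq : (0:ℝ) ≤ ε n * Real.sqrt (Fintype.card (V (n + 1))) *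
      (prodUpTo V A (n + 1) v0 wm)⁻¹ :=
    mul_nonneg (mul_nonneg (le_of_lt (hε n).1) hsnn) (le_of_lt (inv_pos.mpr hqpos))
  calc eNorm ((segMat V C j n).mulVec u)
      ≤ (∏ k ∈ Finset.Ico j n, b k) * eNorm u := h3
    _ ≤ (∏ k ∈ Finset.Ico j n, b k) * (ε n * (l2opNorm (A n) * eNorm (χ (n + 1)))) :=
        mul_le_mul_of_nonneg_left h1 hPnn
    _ ≤ (∏ k ∈ Finset.Ico j n, b k) * (ε n * (l2opNorm (A n) *
          (Real.sqrt (Fintype.card (V (n + 1))) *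
            (c * γ ^ (n + 1) * (prodUpTo V A (n + 1) v0 wm)⁻¹)))) := by
        apply mul_le_mul_of_nonneg_left _ hPnn
        apply mul_le_mul_of_nonneg_left _ (le_of_lt (hε n).1)
        exact mul_le_mul_of_nonneg_left h2 hαnn
    _ = c * (((∏ k ∈ Finset.Ico j n, b k) * l2opNorm (A n) * γ ^ (n + 1)) *
          (ε n * Real.sqrt (Fintype.card (V (n + 1))) *
            (prodUpTo V A (n + 1) v0 wm)⁻¹)) := by ring
    _ ≤ c * ((R * ∏ k ∈ Finset.range (n + 1), (2 * l2opNorm (A k) + 1)) *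
          (ε n * Real.sqrt (Fintype.card (V (n + 1))) *
            (prodUpTo V A (n + 1) v0 wm)⁻¹)) := by
        apply mul_le_mul_of_nonneg_left _ hc
        exact mul_le_mul_of_nonneg_right hR2 hεsq
    _ = c * (R * (ε n * Real.sqrt (Fintype.card (V (n + 1))) *
          (prodUpTo V A (n + 1) v0 wm)⁻¹ *
          ∏ k ∈ Finset.range (n + 1), (2 * l2opNorm (A k) + 1))) := by ring
    _ ≤ c * (R * (1 / 4 : ℝ) ^ (n + 1)) := by
        apply mul_le_mul_of_nonneg_left _ hc
        exact mul_le_mul_of_nonneg_left hb2 hR0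
    _ = c * R * (1 / 4 : ℝ) ^ (n + 1) := by ring

lemma transfer_tendsto
    (hA : ∀ j v w, 0 ≤ A j v w)
    (hApos : ∀ k (v0 : V 0) (w : V k), prodUpTo V A k v0 w ≠ 0)
    (hbound : ∀ (j : ℕ) (v0 : V 0) (w : V (j + 1)),
      ε j * Real.sqrt (Fintype.card (V (j + 1))) * (prodUpTo V A (j + 1) v0 w)⁻¹ *
          ∏ k ∈ Finset.range (j + 1), (2 * l2opNorm (A k) + 1) ≤ (1 / 4 : ℝ) ^ (j + 1))
    (hε : ∀ j, 0 < ε j ∧ ε j < 1 / 2)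
    (C Dm : ∀ j, Matrix (V j) (V (j + 1)) ℝ)
    (χ : ∀ j, V j → ℝ) (hχ0 : ∀ n v, 0 ≤ χ n v)
    (hχ : ∀ n, χ n = (Dm n).mulVec (χ (n + 1)))
    (hCD : ∀ n, N ≤ n → ∀ v w, |C n v w - Dm n v w| ≤ ε n * A n v w)
    (b : ℕ → ℝ) (hb0 : ∀ k, 0 ≤ b k)
    (hCb : ∀ k (x : V (k + 1) → ℝ), eNorm ((C k).mulVec x) ≤ b k * eNorm x)
    (v0 : V 0) (c γ : ℝ) (hc : 0 ≤ c) (hγ : 0 < γ)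
    (hχb : ∀ n, N ≤ n → ∀ w : V n, prodUpTo V A n v0 w * χ n w ≤ c * γ ^ n)
    (j : ℕ) (R : ℝ) (hR0 : 0 ≤ R)
    (hR : ∀ n, N ≤ n → j ≤ n → (∏ k ∈ Finset.Ico j n, b k) * l2opNorm (A n) * γ ^ (n + 1)
        ≤ R * ∏ k ∈ Finset.range (n + 1), (2 * l2opNorm (A k) + 1)) :
    ∃ L : V j → ℝ,
      Filter.Tendsto (fun n => (segMat V C j n).mulVec (χ n)) Filter.atTop (nhds L) ∧
      ∀ n, N ≤ n → j ≤ n →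
        eNorm (L - (segMat V C j n).mulVec (χ n)) ≤ c * R * (1 / 4 : ℝ) ^ n := by
  obtain ⟨L, hL1, hL2⟩ := exists_lim_of_geometric
    (fun n => (segMat V C j n).mulVec (χ n)) (c * R) (mul_nonneg hc hR0) (max j N)
    (fun n hn => increment_bound hA hApos hbound hε C Dm χ hχ0 hχ hCD b hb0 hCb v0 c γ hc hγ
      hχb j R hR0 hR n (le_of_max_le_right hn) (le_of_max_le_left hn))
  exact ⟨L, hL1, fun n h1 h2 => hL2 n (max_le h2 h1)⟩

end Transfer


section Lim
variable (V : ℕ → Type) [∀ n, Fintype (V n)] [∀ n, DecidableEq (V n)] [∀ n, Nonempty (V n)]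

noncomputable def tlim (C : ∀ j, Matrix (V j) (V (j + 1)) ℝ) (χ : ∀ j, V j → ℝ) (j : ℕ) :
    V j → ℝ :=
  limUnder Filter.atTop (fun n => (segMat V C j n).mulVec (χ n))

lemma continuous_mulVec {ι κ : Type} [Fintype ι] [Fintype κ] (M : Matrix ι κ ℝ) :
    Continuous (fun x : κ → ℝ => M.mulVec x) := by
  apply continuous_pi
  intro v
  simp only [Matrix.mulVec, dotProduct]
  exact continuous_finset_sum _ fun w _ => continuous_const.mul (continuous_apply w)

lemma tlim_mem (C : ∀ j, Matrix (V j) (V (j + 1)) ℝ) (hC : ∀ k v w, 0 ≤ C k v w)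
    (χ : ∀ j, V j → ℝ) (hχ0 : ∀ n v, 0 ≤ χ n v)
    (hT : ∀ j, Filter.Tendsto (fun n => (segMat V C j n).mulVec (χ n)) Filter.atTop
      (nhds (tlim V C χ j))) :
    tlim V C χ ∈ limSet V C := by
  constructor
  · intro j v
    have hTv : Filter.Tendsto (fun n => (segMat V C j n).mulVec (χ n) v) Filter.atTop
        (nhds (tlim V C χ j v)) := ((continuous_apply v).tendsto _).comp (hT j)
    apply ge_of_tendsto' hTv
    intro n
    simp only [Matrix.mulVec, dotProduct]
    exact Finset.sum_nonneg fun w _ => mul_nonneg (segMat_nonneg V C hC j n v w) (hχ0 n w)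
  · intro j
    have h1 : Filter.Tendsto (fun n => (C j).mulVec ((segMat V C (j + 1) n).mulVec (χ n)))
        Filter.atTop (nhds ((C j).mulVec (tlim V C χ (j + 1)))) :=
      ((continuous_mulVec (C j)).tendsto _).comp (hT (j + 1))
    have h2 : ∀ᶠ n in Filter.atTop,
        (C j).mulVec ((segMat V C (j + 1) n).mulVec (χ n)) = (segMat V C j n).mulVec (χ n) := by
      filter_upwards [Filter.eventually_ge_atTop (j + 1)] with n hn
      rw [Matrix.mulVec_mulVec, ← segMat_succ_left V C (by omega : j < n)]
    exact tendsto_nhds_unique (hT j) (h1.congr' h2)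

lemma tlim_combo (C : ∀ j, Matrix (V j) (V (j + 1)) ℝ) (χ₁ χ₂ : ∀ j, V j → ℝ) (a b : ℝ)
    (j : ℕ)
    (h1 : Filter.Tendsto (fun n => (segMat V C j n).mulVec (χ₁ n)) Filter.atTop
      (nhds (tlim V C χ₁ j)))
    (h2 : Filter.Tendsto (fun n => (segMat V C j n).mulVec (χ₂ n)) Filter.atTop
      (nhds (tlim V C χ₂ j))) :
    tlim V C (a • χ₁ + b • χ₂) j = a • tlim V C χ₁ j + b • tlim V C χ₂ j := by
  unfold tlim
  apply Filter.Tendsto.limUnder_eq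
  have he : ∀ n, a • (segMat V C j n).mulVec (χ₁ n) + b • (segMat V C j n).mulVec (χ₂ n)
      = (segMat V C j n).mulVec ((a • χ₁ + b • χ₂) n) := by
    intro n
    show _ = (segMat V C j n).mulVec (a • χ₁ n + b • χ₂ n)
    rw [Matrix.mulVec_add, Matrix.mulVec_smul, Matrix.mulVec_smul]
  exact Filter.Tendsto.congr he ((h1.const_smul a).add (h2.const_smul b))

end Lim


section Packages
variable {V : ℕ → Type} [∀ n, Fintype (V n)] [∀ n, DecidableEq (V n)] [∀ n, Nonempty (V n)]
variable {A B : ∀ j, Matrix (V j) (V (j + 1)) ℝ} {ε : ℕ → ℝ} {N : ℕ}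

lemma phiPack
    (hA : ∀ j v w, 0 ≤ A j v w)
    (hApos : ∀ k (v0 : V 0) (w : V k), prodUpTo V A k v0 w ≠ 0)
    (hB : ∀ j v w, 0 ≤ B j v w)
    (hε : ∀ j, 0 < ε j ∧ ε j < 1 / 2)
    (hbound : ∀ (j : ℕ) (v0 : V 0) (w : V (j + 1)),
      ε j * Real.sqrt (Fintype.card (V (j + 1))) * (prodUpTo V A (j + 1) v0 w)⁻¹ *
          ∏ k ∈ Finset.range (j + 1), (2 * l2opNorm (A k) + 1) ≤ (1 / 4 : ℝ) ^ (j + 1))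
    (hpert : ∀ j, N ≤ j → ∀ v w, |A j v w - B j v w| ≤ ε j * A j v w)
    (v0 : V 0) {ψ : ∀ j, V j → ℝ} (hψ : ψ ∈ limSet V A) (j : ℕ) :
    Filter.Tendsto (fun n => (segMat V B j n).mulVec (ψ n)) Filter.atTop
      (nhds (tlim V B ψ j)) ∧
    ∀ n, N ≤ n → j ≤ n → eNorm (tlim V B ψ j - (segMat V B j n).mulVec (ψ n)) ≤
      ψ 0 v0 * (EE B N * (DD A j)⁻¹) * (1 / 4 : ℝ) ^ n := by
  have hR0 : (0:ℝ) ≤ EE B N * (DD A j)⁻¹ :=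
    mul_nonneg (le_trans zero_le_one (one_le_EE B N)) (le_of_lt (inv_pos.mpr (DD_pos A j)))
  have hRB : ∀ n, N ≤ n → j ≤ n →
      (∏ k ∈ Finset.Ico j n, bB A B N k) * l2opNorm (A n) * (1:ℝ) ^ (n + 1)
        ≤ (EE B N * (DD A j)⁻¹) * ∏ k ∈ Finset.range (n + 1), (2 * l2opNorm (A k) + 1) := by
    intro n hNn hjn
    have hDj := DD_pos A j
    have hX : (∏ k ∈ Finset.Ico j n, bB A B N k) ≤ EE B N * DD A n * (DD A j)⁻¹ := by
      rw [← div_eq_mul_inv, le_div_iff₀ hDj]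
      exact prod_bB_le A B N hjn hNn
    have hXnn : (0:ℝ) ≤ EE B N * DD A n * (DD A j)⁻¹ :=
      mul_nonneg (mul_nonneg (le_trans zero_le_one (one_le_EE B N)) (le_of_lt (DD_pos A n)))
        (le_of_lt (inv_pos.mpr hDj))
    rw [show (∏ k ∈ Finset.range (n + 1), (2 * l2opNorm (A k) + 1)) = DD A n * nbA A n from
      Finset.prod_range_succ (nbA A) n]
    rw [one_pow, mul_one]
    calc (∏ k ∈ Finset.Ico j n, bB A B N k) * l2opNorm (A n)
        ≤ (EE B N * DD A n * (DD A j)⁻¹) * l2opNorm (A n) :=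
          mul_le_mul_of_nonneg_right hX (l2opNorm_nonneg _)
      _ ≤ (EE B N * DD A n * (DD A j)⁻¹) * nbA A n := by
          apply mul_le_mul_of_nonneg_left _ hXnn
          have := l2opNorm_nonneg (A n); unfold nbA; linarith
      _ = (EE B N * (DD A j)⁻¹) * (DD A n * nbA A n) := by ring
  obtain ⟨L, hL1, hL2⟩ := transfer_tendsto hA hApos hbound hε B A ψ hψ.1 hψ.2
    (fun n hn v w => by rw [abs_sub_comm]; exact hpert n hn v w)
    (bB A B N) (bB_nonneg A B N) (bB_opBound hA hB hε hpert) v0 (ψ 0 v0) 1 (hψ.1 0 v0) one_pos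
    (fun n _ w => by simpa using memA_bound hA hψ v0 n w)
    j (EE B N * (DD A j)⁻¹) hR0 hRB
  have he : tlim V B ψ j = L := hL1.limUnder_eq
  exact ⟨he ▸ hL1, fun n h1 h2 => he ▸ hL2 n h1 h2⟩

lemma psiPack
    (hA : ∀ j v w, 0 ≤ A j v w)
    (hApos : ∀ k (v0 : V 0) (w : V k), prodUpTo V A k v0 w ≠ 0)
    (hB : ∀ j v w, 0 ≤ B j v w)
    (hε : ∀ j, 0 < ε j ∧ ε j < 1 / 2)
    (hbound : ∀ (j : ℕ) (v0 : V 0) (w : V (j + 1)),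
      ε j * Real.sqrt (Fintype.card (V (j + 1))) * (prodUpTo V A (j + 1) v0 w)⁻¹ *
          ∏ k ∈ Finset.range (j + 1), (2 * l2opNorm (A k) + 1) ≤ (1 / 4 : ℝ) ^ (j + 1))
    (hpert : ∀ j, N ≤ j → ∀ v w, |A j v w - B j v w| ≤ ε j * A j v w)
    (v0 : V 0) {φ : ∀ j, V j → ℝ} (hφ : φ ∈ limSet V B) (j : ℕ) :
    Filter.Tendsto (fun n => (segMat V A j n).mulVec (φ n)) Filter.atTop
      (nhds (tlim V A φ j)) ∧
    ∀ n, N ≤ n → j ≤ n → eNorm (tlim V A φ j - (segMat V A j n).mulVec (φ n)) ≤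
      ((∑ v, prodUpTo V A N v0 v) * (∑ v, φ N v) * ((2:ℝ) ^ N)⁻¹) *
        ((2:ℝ) ^ j * (DD A j)⁻¹) * (1 / 4 : ℝ) ^ n := by
  have hc : (0:ℝ) ≤ (∑ v, prodUpTo V A N v0 v) * (∑ v, φ N v) * ((2:ℝ) ^ N)⁻¹ := by
    apply mul_nonneg (mul_nonneg _ _) (by positivity)
    · exact Finset.sum_nonneg fun v _ => by
        rw [prodUpTo_eq_seg]; exact segMat_nonneg V A hA 0 N v0 v
    · exact Finset.sum_nonneg fun v _ => hφ.1 N v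
  have hR0 : (0:ℝ) ≤ (2:ℝ) ^ j * (DD A j)⁻¹ :=
    mul_nonneg (by positivity) (le_of_lt (inv_pos.mpr (DD_pos A j)))
  obtain ⟨L, hL1, hL2⟩ := transfer_tendsto hA hApos hbound hε A B φ hφ.1 hφ.2
    (fun n hn v w => hpert n hn v w)
    (fun k => l2opNorm (A k)) (fun k => l2opNorm_nonneg _) (fun k x => eNorm_mulVec_le _ _)
    v0 _ 2 hc two_pos
    (fun n hn w => memB_bound hA hB hε hpert hφ v0 hn w)
    j ((2:ℝ) ^ j * (DD A j)⁻¹) hR0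
    (fun n hNn hjn => by simpa [nbA] using prod_lA_pow_le A hjn)
  have he : tlim V A φ j = L := hL1.limUnder_eq
  exact ⟨he ▸ hL1, fun n h1 h2 => he ▸ hL2 n h1 h2⟩

end Packages


theorem stmt_3_aux (V : ℕ → Type) [∀ n, Fintype (V n)] [∀ n, DecidableEq (V n)]
    [∀ n, Nonempty (V n)] [Subsingleton (V 0)]
    (A B : ∀ j, Matrix (V j) (V (j + 1)) ℝ)
    (hA : ∀ j v w, 0 ≤ A j v w)
    (hApos : ∀ k (v0 : V 0) (w : V k), prodUpTo V A k v0 w ≠ 0)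
    (hB : ∀ j v w, 0 ≤ B j v w)
    (hBpos : ∀ k (v0 : V 0) (w : V k), prodUpTo V B k v0 w ≠ 0)
    (ε : ℕ → ℝ) (hε : ∀ j, 0 < ε j ∧ ε j < 1 / 2)
    (hbound : ∀ (j : ℕ) (v0 : V 0) (w : V (j + 1)),
      ε j * Real.sqrt (Fintype.card (V (j + 1))) * (prodUpTo V A (j + 1) v0 w)⁻¹ *
          ∏ k ∈ Finset.range (j + 1), (2 * l2opNorm (A k) + 1) ≤ (1 / 4 : ℝ) ^ (j + 1))
    (N : ℕ)
    (hpert : ∀ j, N ≤ j → ∀ v w, |A j v w - B j v w| ≤ ε j * A j v w) :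
    ∃ Φ : ↥(limSet V A) ≃ₜ ↥(limSet V B),
      ∀ (x y : ∀ j, V j → ℝ) (hx : x ∈ limSet V A) (hy : y ∈ limSet V A) (t : ℝ),
        0 ≤ t → t ≤ 1 → ∀ hxy : t • x + (1 - t) • y ∈ limSet V A,
          (Φ ⟨t • x + (1 - t) • y, hxy⟩ : ∀ j, V j → ℝ) =
            t • (Φ ⟨x, hx⟩ : ∀ j, V j → ℝ) + (1 - t) • (Φ ⟨y, hy⟩ : ∀ j, V j → ℝ) := by
  classical
  obtain ⟨v0⟩ : Nonempty (V 0) := inferInstance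
  have memΦ : ∀ {ψ : ∀ j, V j → ℝ}, ψ ∈ limSet V A → tlim V B ψ ∈ limSet V B :=
    fun {ψ} hψ => tlim_mem V B hB ψ hψ.1
      (fun j => (phiPack hA hApos hB hε hbound hpert v0 hψ j).1)
  have memΨ : ∀ {φ : ∀ j, V j → ℝ}, φ ∈ limSet V B → tlim V A φ ∈ limSet V A :=
    fun {φ} hφ => tlim_mem V A hA φ hφ.1
      (fun j => (psiPack hA hApos hB hε hbound hpert v0 hφ j).1)
  have qpow : Filter.Tendsto (fun n : ℕ => (1 / 4 : ℝ) ^ n) Filter.atTop (nhds 0) :=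
    tendsto_pow_atTop_nhds_zero_of_lt_one (by norm_num) (by norm_num)
  have hpow : Filter.Tendsto (fun n : ℕ => (1 / 2 : ℝ) ^ n) Filter.atTop (nhds 0) :=
    tendsto_pow_atTop_nhds_zero_of_lt_one (by norm_num) (by norm_num)
  -- left inverse
  have idA : ∀ ψ, ψ ∈ limSet V A → tlim V A (tlim V B ψ) = ψ := by
    intro ψ hψ
    have hφmem := memΦ hψ
    funext j
    have hT := (psiPack hA hApos hB hε hbound hpert v0 hφmem j).1
    have hto : Filter.Tendsto (fun n => (segMat V A j n).mulVec (tlim V B ψ n))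
        Filter.atTop (nhds (ψ j)) := by
      rw [tendsto_iff_dist_tendsto_zero]
      apply squeeze_zero' (Filter.Eventually.of_forall fun n => dist_nonneg)
        (g := fun n => ψ 0 v0 * EE B N * (DD A j)⁻¹ * (1 / 4 : ℝ) ^ n)
      · filter_upwards [Filter.eventually_ge_atTop (max j N)] with n hn
        have hjn := le_of_max_le_left hn
        have hNn := le_of_max_le_right hn
        have hpsij : ψ j = (segMat V A j n).mulVec (ψ n) := limSet_seg V hψ.2 hjn
        have hlev : eNorm (tlim V B ψ n - ψ n) ≤
            ψ 0 v0 * (EE B N * (DD A n)⁻¹) * (1 / 4 : ℝ) ^ n := by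
          have h5 := (phiPack hA hApos hB hε hbound hpert v0 hψ n).2 n hNn (le_refl n)
          rwa [segMat_self, Matrix.one_mulVec] at h5
        have hprod : (∏ k ∈ Finset.Ico j n, l2opNorm (A k)) * (DD A n)⁻¹ ≤ (DD A j)⁻¹ := by
          have h2 := div_trick (DD_pos A j) (DD_pos A n)
            (by simpa using prod_lA_le A hjn :
              (∏ k ∈ Finset.Ico j n, l2opNorm (A k)) * DD A j ≤ 1 * DD A n)
          simpa using h2
        have hPnn : (0:ℝ) ≤ ∏ k ∈ Finset.Ico j n, l2opNorm (A k) :=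
          Finset.prod_nonneg fun k _ => l2opNorm_nonneg _
        have hrest : (0:ℝ) ≤ ψ 0 v0 * EE B N * (1 / 4 : ℝ) ^ n :=
          mul_nonneg (mul_nonneg (hψ.1 0 v0) (le_trans zero_le_one (one_le_EE B N)))
            (by positivity)
        calc dist ((segMat V A j n).mulVec (tlim V B ψ n)) (ψ j)
            ≤ eNorm ((segMat V A j n).mulVec (tlim V B ψ n) - ψ j) := dist_le_eNorm_sub _ _
          _ = eNorm ((segMat V A j n).mulVec (tlim V B ψ n - ψ n)) := by
              rw [hpsij, ← Matrix.mulVec_sub]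
          _ ≤ (∏ k ∈ Finset.Ico j n, l2opNorm (A k)) * eNorm (tlim V B ψ n - ψ n) :=
              eNorm_segMat_mulVec_le V A _ (fun k => l2opNorm_nonneg _)
                (fun k x => eNorm_mulVec_le _ _) hjn _
          _ ≤ (∏ k ∈ Finset.Ico j n, l2opNorm (A k)) *
                (ψ 0 v0 * (EE B N * (DD A n)⁻¹) * (1 / 4 : ℝ) ^ n) :=
              mul_le_mul_of_nonneg_left hlev hPnn
          _ = ((∏ k ∈ Finset.Ico j n, l2opNorm (A k)) * (DD A n)⁻¹) *
                (ψ 0 v0 * EE B N * (1 / 4 : ℝ) ^ n) := by ring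
          _ ≤ (DD A j)⁻¹ * (ψ 0 v0 * EE B N * (1 / 4 : ℝ) ^ n) :=
              mul_le_mul_of_nonneg_right hprod hrest
          _ = ψ 0 v0 * EE B N * (DD A j)⁻¹ * (1 / 4 : ℝ) ^ n := by ring
      · simpa using qpow.const_mul (ψ 0 v0 * EE B N * (DD A j)⁻¹)
    exact tendsto_nhds_unique hT hto
  -- right inverse
  have idB : ∀ φ, φ ∈ limSet V B → tlim V B (tlim V A φ) = φ := by
    intro φ hφ
    have hψmem := memΨ hφ
    funext j
    have hT := (phiPack hA hApos hB hε hbound hpert v0 hψmem j).1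
    set cφ : ℝ := (∑ v, prodUpTo V A N v0 v) * (∑ v, φ N v) * ((2:ℝ) ^ N)⁻¹ with hcφ
    have hcφnn : 0 ≤ cφ := by
      apply mul_nonneg (mul_nonneg _ _) (by positivity)
      · exact Finset.sum_nonneg fun v _ => by
          rw [prodUpTo_eq_seg]; exact segMat_nonneg V A hA 0 N v0 v
      · exact Finset.sum_nonneg fun v _ => hφ.1 N v
    have hto : Filter.Tendsto (fun n => (segMat V B j n).mulVec (tlim V A φ n))
        Filter.atTop (nhds (φ j)) := by
      rw [tendsto_iff_dist_tendsto_zero]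
      apply squeeze_zero' (Filter.Eventually.of_forall fun n => dist_nonneg)
        (g := fun n => EE B N * (DD A j)⁻¹ * cφ * (1 / 2 : ℝ) ^ n)
      · filter_upwards [Filter.eventually_ge_atTop (max j N)] with n hn
        have hjn := le_of_max_le_left hn
        have hNn := le_of_max_le_right hn
        have hphij : φ j = (segMat V B j n).mulVec (φ n) := limSet_seg V hφ.2 hjn
        have hlev : eNorm (tlim V A φ n - φ n) ≤
            cφ * ((2:ℝ) ^ n * (DD A n)⁻¹) * (1 / 4 : ℝ) ^ n := by
          have h5 := (psiPack hA hApos hB hε hbound hpert v0 hφ n).2 n hNn (le_refl n)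
          rwa [segMat_self, Matrix.one_mulVec] at h5
        have hprod : (∏ k ∈ Finset.Ico j n, bB A B N k) * (DD A n)⁻¹ ≤
            EE B N * (DD A j)⁻¹ :=
          div_trick (DD_pos A j) (DD_pos A n) (prod_bB_le A B N hjn hNn)
        have hPnn : (0:ℝ) ≤ ∏ k ∈ Finset.Ico j n, bB A B N k :=
          Finset.prod_nonneg fun k _ => bB_nonneg A B N k
        have hrest : (0:ℝ) ≤ cφ * ((2:ℝ) ^ n * (1 / 4 : ℝ) ^ n) :=
          mul_nonneg hcφnn (by positivity)
        have hhalf : (2:ℝ) ^ n * (1 / 4 : ℝ) ^ n = (1 / 2 : ℝ) ^ n := by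
          rw [← mul_pow]; norm_num
        calc dist ((segMat V B j n).mulVec (tlim V A φ n)) (φ j)
            ≤ eNorm ((segMat V B j n).mulVec (tlim V A φ n) - φ j) := dist_le_eNorm_sub _ _
          _ = eNorm ((segMat V B j n).mulVec (tlim V A φ n - φ n)) := by
              rw [hphij, ← Matrix.mulVec_sub]
          _ ≤ (∏ k ∈ Finset.Ico j n, bB A B N k) * eNorm (tlim V A φ n - φ n) :=
              eNorm_segMat_mulVec_le V B _ (bB_nonneg A B N)
                (bB_opBound hA hB hε hpert) hjn _
          _ ≤ (∏ k ∈ Finset.Ico j n, bB A B N k) *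
                (cφ * ((2:ℝ) ^ n * (DD A n)⁻¹) * (1 / 4 : ℝ) ^ n) :=
              mul_le_mul_of_nonneg_left hlev hPnn
          _ = ((∏ k ∈ Finset.Ico j n, bB A B N k) * (DD A n)⁻¹) *
                (cφ * ((2:ℝ) ^ n * (1 / 4 : ℝ) ^ n)) := by ring
          _ ≤ (EE B N * (DD A j)⁻¹) * (cφ * ((2:ℝ) ^ n * (1 / 4 : ℝ) ^ n)) :=
              mul_le_mul_of_nonneg_right hprod hrest
          _ = EE B N * (DD A j)⁻¹ * cφ * (1 / 2 : ℝ) ^ n := by rw [hhalf]; ring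
      · simpa using hpow.const_mul (EE B N * (DD A j)⁻¹ * cφ)
    exact tendsto_nhds_unique hT hto
  -- continuity of the forward map
  have contPhi : Continuous (fun p : ↥(limSet V A) => tlim V B (p : ∀ j, V j → ℝ)) := by
    rw [continuous_iff_continuousAt]
    intro p₀
    rw [continuousAt_pi]
    intro j
    set c₀ : ℝ := (p₀ : ∀ j, V j → ℝ) 0 v0 with hc₀
    have hc₀nn : 0 ≤ c₀ := p₀.2.1 0 v0
    set O : Set ↥(limSet V A) := {p | (p : ∀ j, V j → ℝ) 0 v0 < c₀ + 1} with hO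
    have hOopen : IsOpen O := by
      have hcont : Continuous (fun p : ↥(limSet V A) => (p : ∀ j, V j → ℝ) 0 v0) := by
        have h1 : Continuous (fun p : ↥(limSet V A) => (p : ∀ j, V j → ℝ) 0) :=
          (continuous_apply (0 : ℕ)).comp continuous_subtype_val
        exact (continuous_apply v0).comp h1
      exact isOpen_lt hcont continuous_const
    have hp₀O : p₀ ∈ O := by simp only [hO, Set.mem_setOf_eq]; linarith
    have hKnn : (0:ℝ) ≤ (c₀ + 1) * (EE B N * (DD A j)⁻¹) := by
      apply mul_nonneg (by linarith)
      exact mul_nonneg (le_trans zero_le_one (one_le_EE B N))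
        (le_of_lt (inv_pos.mpr (DD_pos A j)))
    have hunif : TendstoUniformlyOn
        (fun n (p : ↥(limSet V A)) => (segMat V B j n).mulVec ((p : ∀ j, V j → ℝ) n))
        (fun p => tlim V B (p : ∀ j, V j → ℝ) j) Filter.atTop O := by
      rw [Metric.tendstoUniformlyOn_iff]
      intro δ hδ
      have htend : Filter.Tendsto
          (fun n : ℕ => (c₀ + 1) * (EE B N * (DD A j)⁻¹) * (1 / 4 : ℝ) ^ n)
          Filter.atTop (nhds 0) := by
        simpa using qpow.const_mul ((c₀ + 1) * (EE B N * (DD A j)⁻¹))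
      filter_upwards [htend.eventually_lt_const hδ, Filter.eventually_ge_atTop (max j N)]
        with n h1 h2 p hp
      have hjn := le_of_max_le_left h2
      have hNn := le_of_max_le_right h2
      have hb := (phiPack hA hApos hB hε hbound hpert v0 p.2 j).2 n hNn hjn
      have hmono : (p : ∀ j, V j → ℝ) 0 v0 * (EE B N * (DD A j)⁻¹) * (1 / 4 : ℝ) ^ n ≤
          (c₀ + 1) * (EE B N * (DD A j)⁻¹) * (1 / 4 : ℝ) ^ n := by
        apply mul_le_mul_of_nonneg_right _ (by positivity)
        apply mul_le_mul_of_nonneg_right (le_of_lt hp)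
        exact mul_nonneg (le_trans zero_le_one (one_le_EE B N))
          (le_of_lt (inv_pos.mpr (DD_pos A j)))
      calc dist (tlim V B (p : ∀ j, V j → ℝ) j)
            ((segMat V B j n).mulVec ((p : ∀ j, V j → ℝ) n))
          ≤ eNorm (tlim V B (p : ∀ j, V j → ℝ) j -
              (segMat V B j n).mulVec ((p : ∀ j, V j → ℝ) n)) := dist_le_eNorm_sub _ _
        _ ≤ (p : ∀ j, V j → ℝ) 0 v0 * (EE B N * (DD A j)⁻¹) * (1 / 4 : ℝ) ^ n := hb
        _ ≤ (c₀ + 1) * (EE B N * (DD A j)⁻¹) * (1 / 4 : ℝ) ^ n := hmono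
        _ < δ := h1
    have hconts : ∀ᶠ n in Filter.atTop, ContinuousOn
        (fun p : ↥(limSet V A) => (segMat V B j n).mulVec ((p : ∀ j, V j → ℝ) n)) O :=
      Filter.Eventually.of_forall fun n => Continuous.continuousOn
        ((continuous_mulVec _).comp ((continuous_apply n).comp continuous_subtype_val))
    exact (hunif.continuousOn hconts.frequently).continuousAt (hOopen.mem_nhds hp₀O)
  -- continuity of the inverse map
  have contPsi : Continuous (fun p : ↥(limSet V B) => tlim V A (p : ∀ j, V j → ℝ)) := by
    rw [continuous_iff_continuousAt]
    intro p₀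
    rw [continuousAt_pi]
    intro j
    set S : ℝ := ∑ v, prodUpTo V A N v0 v with hS
    have hSnn : 0 ≤ S := Finset.sum_nonneg fun v _ => by
      rw [prodUpTo_eq_seg]; exact segMat_nonneg V A hA 0 N v0 v
    set c₁ : ℝ := ∑ v, (p₀ : ∀ j, V j → ℝ) N v with hc₁
    have hc₁nn : 0 ≤ c₁ := Finset.sum_nonneg fun v _ => p₀.2.1 N v
    set O : Set ↥(limSet V B) := {p | ∑ v, (p : ∀ j, V j → ℝ) N v < c₁ + 1} with hO
    have hOopen : IsOpen O := by
      have hcont : Continuous (fun p : ↥(limSet V B) => ∑ v, (p : ∀ j, V j → ℝ) N v) :=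
        continuous_finset_sum _ fun v _ => by
          have h1 : Continuous (fun p : ↥(limSet V B) => (p : ∀ j, V j → ℝ) N) :=
            (continuous_apply N).comp continuous_subtype_val
          exact (continuous_apply v).comp h1
      exact isOpen_lt hcont continuous_const
    have hp₀O : p₀ ∈ O := by simp only [hO, Set.mem_setOf_eq]; linarith
    have hunif : TendstoUniformlyOn
        (fun n (p : ↥(limSet V B)) => (segMat V A j n).mulVec ((p : ∀ j, V j → ℝ) n))
        (fun p => tlim V A (p : ∀ j, V j → ℝ) j) Filter.atTop O := by
      rw [Metric.tendstoUniformlyOn_iff]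
      intro δ hδ
      have htend : Filter.Tendsto
          (fun n : ℕ => S * (c₁ + 1) * ((2:ℝ) ^ N)⁻¹ * ((2:ℝ) ^ j * (DD A j)⁻¹) *
            (1 / 4 : ℝ) ^ n) Filter.atTop (nhds 0) := by
        simpa using qpow.const_mul (S * (c₁ + 1) * ((2:ℝ) ^ N)⁻¹ * ((2:ℝ) ^ j * (DD A j)⁻¹))
      filter_upwards [htend.eventually_lt_const hδ, Filter.eventually_ge_atTop (max j N)]
        with n h1 h2 p hp
      have hjn := le_of_max_le_left h2
      have hNn := le_of_max_le_right h2
      have hb := (psiPack hA hApos hB hε hbound hpert v0 p.2 j).2 n hNn hjn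
      have hRnn : (0:ℝ) ≤ (2:ℝ) ^ j * (DD A j)⁻¹ :=
        mul_nonneg (by positivity) (le_of_lt (inv_pos.mpr (DD_pos A j)))
      have hmono : S * (∑ v, (p : ∀ j, V j → ℝ) N v) * ((2:ℝ) ^ N)⁻¹ *
            ((2:ℝ) ^ j * (DD A j)⁻¹) * (1 / 4 : ℝ) ^ n ≤
          S * (c₁ + 1) * ((2:ℝ) ^ N)⁻¹ * ((2:ℝ) ^ j * (DD A j)⁻¹) * (1 / 4 : ℝ) ^ n := by
        apply mul_le_mul_of_nonneg_right _ (by positivity)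
        apply mul_le_mul_of_nonneg_right _ hRnn
        apply mul_le_mul_of_nonneg_right _ (by positivity)
        exact mul_le_mul_of_nonneg_left (le_of_lt hp) hSnn
      calc dist (tlim V A (p : ∀ j, V j → ℝ) j)
            ((segMat V A j n).mulVec ((p : ∀ j, V j → ℝ) n))
          ≤ eNorm (tlim V A (p : ∀ j, V j → ℝ) j -
              (segMat V A j n).mulVec ((p : ∀ j, V j → ℝ) n)) := dist_le_eNorm_sub _ _
        _ ≤ S * (∑ v, (p : ∀ j, V j → ℝ) N v) * ((2:ℝ) ^ N)⁻¹ *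
              ((2:ℝ) ^ j * (DD A j)⁻¹) * (1 / 4 : ℝ) ^ n := hb
        _ ≤ S * (c₁ + 1) * ((2:ℝ) ^ N)⁻¹ * ((2:ℝ) ^ j * (DD A j)⁻¹) * (1 / 4 : ℝ) ^ n := hmono
        _ < δ := h1
    have hconts : ∀ᶠ n in Filter.atTop, ContinuousOn
        (fun p : ↥(limSet V B) => (segMat V A j n).mulVec ((p : ∀ j, V j → ℝ) n)) O :=
      Filter.Eventually.of_forall fun n => Continuous.continuousOn
        ((continuous_mulVec _).comp ((continuous_apply n).comp continuous_subtype_val))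
    exact (hunif.continuousOn hconts.frequently).continuousAt (hOopen.mem_nhds hp₀O)
  -- assemble the homeomorphism
  refine ⟨⟨⟨fun p => ⟨tlim V B (p : ∀ j, V j → ℝ), memΦ p.2⟩,
      fun p => ⟨tlim V A (p : ∀ j, V j → ℝ), memΨ p.2⟩,
      fun p => Subtype.ext (idA (p : ∀ j, V j → ℝ) p.2),
      fun p => Subtype.ext (idB (p : ∀ j, V j → ℝ) p.2)⟩,
      Continuous.subtype_mk contPhi _, Continuous.subtype_mk contPsi _⟩, ?_⟩
  intro x y hx hy t ht0 ht1 hxy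
  show tlim V B (t • x + (1 - t) • y) = t • tlim V B x + (1 - t) • tlim V B y
  funext j
  show tlim V B (t • x + (1 - t) • y) j = t • tlim V B x j + (1 - t) • tlim V B y j
  exact tlim_combo V B x y t (1 - t) j
    (phiPack hA hApos hB hε hbound hpert v0 hx j).1
    (phiPack hA hApos hB hε hbound hpert v0 hy j).1


/-- Perturbation lemma: if `B^{(j)}` is entrywise `ε_j`-close to `A^{(j)}` for `j ≥ N`,
with `ε_j ∈ (0,1/2)` satisfying
`ε_j √(#Br_j) ((A^{(1)}⋯A^{(j)})_{v_0,w})⁻¹ ∏_{k=1}^j (2‖A^{(k)}‖+1) ≤ 4^{-j}`,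
then the inverse limits of the two systems are affinely homeomorphic. -/
theorem stmt_3 (A B : ∀ j, Matrix (V j) (V (j + 1)) ℝ)
    (hA : ∀ j v w, 0 ≤ A j v w)
    (hApos : ∀ k (v0 : V 0) (w : V k), prodUpTo V A k v0 w ≠ 0)
    (hB : ∀ j v w, 0 ≤ B j v w)
    (hBpos : ∀ k (v0 : V 0) (w : V k), prodUpTo V B k v0 w ≠ 0)
    (ε : ℕ → ℝ) (hε : ∀ j, 0 < ε j ∧ ε j < 1 / 2)
    (hbound : ∀ (j : ℕ) (v0 : V 0) (w : V (j + 1)),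
      ε j * Real.sqrt (Fintype.card (V (j + 1))) * (prodUpTo V A (j + 1) v0 w)⁻¹ *
          ∏ k ∈ Finset.range (j + 1), (2 * l2opNorm (A k) + 1) ≤ (1 / 4 : ℝ) ^ (j + 1))
    (N : ℕ)
    (hpert : ∀ j, N ≤ j → ∀ v w, |A j v w - B j v w| ≤ ε j * A j v w) :
    ∃ Φ : ↥(limSet V A) ≃ₜ ↥(limSet V B),
      ∀ (x y : ∀ j, V j → ℝ) (hx : x ∈ limSet V A) (hy : y ∈ limSet V A) (t : ℝ),
        0 ≤ t → t ≤ 1 → ∀ hxy : t • x + (1 - t) • y ∈ limSet V A,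
          (Φ ⟨t • x + (1 - t) • y, hxy⟩ : ∀ j, V j → ℝ) =
            t • (Φ ⟨x, hx⟩ : ∀ j, V j → ℝ) + (1 - t) • (Φ ⟨y, hy⟩ : ∀ j, V j → ℝ) := by
  exact stmt_3_aux V A B hA hApos hB hBpos ε hε hbound N hpert
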